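/- Theorem 5 (convergence of learned full-conditional manifolds): let i ∈ ι, and for each N ∈ ℕ let p_N be a positive distribution on X and R_N a function assigning to each subset S ⊆ ι∖{i} a real number R_N(S) ≥ 0; let Ŝ_N ⊆ ι∖{i} minimize S ↦ H_{p_N}(Xᵢ|X_S) + R_N(S) over all subsets S ⊆ ι∖{i}. If lim_{N→∞} R_N(ι∖{i}) = 0, then lim_{N→∞} ( H_{p_N}(Xᵢ|X_{Ŝ_N}) − H_{p_N}(Xᵢ|X₋ᵢ) ) = 0; equivalently, KL(p_N‖E(θ̂_N)) → 0 where θ̂_N(a,x) = p_N(a|x_{Ŝ_N}). -/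

import Mathlib

open Finset

variable {ι : Type} [Fintype ι] [DecidableEq ι] [Nonempty ι]
  {α : ι → Type} [∀ i, Fintype (α i)] [∀ i, DecidableEq (α i)] [∀ i, Nonempty (α i)]

/-- `p` is a probability distribution on the joint space `X = Π j, α j`. -/
def IsDist (p : (∀ j, α j) → ℝ) : Prop :=
  (∀ x, 0 ≤ p x) ∧ ∑ x, p x = 1

/-- The `i`-marginal `p₋ᵢ(x) = Σ_{a ∈ α i} p(x[i↦a])`. -/
noncomputable def marg (p : (∀ j, α j) → ℝ) (i : ι) (x : ∀ j, α j) : ℝ :=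
  ∑ a, p (Function.update x i a)

/-- The full conditional `p(xᵢ|x₋ᵢ) = p(x)/p₋ᵢ(x)`. -/
noncomputable def fullCond (p : (∀ j, α j) → ℝ) (i : ι) (x : ∀ j, α j) : ℝ :=
  p x / marg p i x

/-- `θ` is a conditional probability table (CPT) at node `i`. -/
def IsCPT (i : ι) (θ : α i → (∀ j, α j) → ℝ) : Prop :=
  (∀ a x, 0 < θ a x) ∧ (∀ x, ∑ a, θ a x = 1) ∧
  (∀ a x (b : α i), θ a (Function.update x i b) = θ a x)

/-- `q` belongs to the full-conditional manifold `E(θ)`. -/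
def memE (i : ι) (θ : α i → (∀ j, α j) → ℝ) (q : (∀ j, α j) → ℝ) : Prop :=
  ∀ x, q x = marg q i x * θ (x i) x

/-- Kullback–Leibler divergence. -/
noncomputable def KL (p q : (∀ j, α j) → ℝ) : ℝ :=
  ∑ x, p x * Real.log (p x / q x)

/-- Restriction of `x` to the coordinates in `S`. -/
def restr (S : Finset ι) (x : ∀ j, α j) : ∀ j : S, α j :=
  fun j => x j

/-- Marginal of `p` on the coordinates in `S`: `p_S(y) = Σ_{x : x_S = y} p(x)`. -/
noncomputable def margS (p : (∀ j, α j) → ℝ) (S : Finset ι) (y : ∀ j : S, α j) : ℝ :=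
  ∑ x, if restr S x = y then p x else 0

/-- A canonical point of the joint space whose `S`-coordinates are `y`. -/
noncomputable def fill (S : Finset ι) (y : ∀ j : S, α j) : ∀ j, α j :=
  fun j => if h : j ∈ S then y ⟨j, h⟩ else Classical.arbitrary (α j)

/-- The conditional entropy
`H_p(Xᵢ|X_S) = −Σ_x p(x)·log( p_{S∪{i}}(x_{S∪{i}}) / p_S(x_S) )`;
`H_p(Xᵢ|X₋ᵢ)` is the case `S = Finset.univ.erase i`. -/
noncomputable def condEnt (p : (∀ j, α j) → ℝ) (i : ι) (S : Finset ι) : ℝ :=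
  -∑ x, p x * Real.log
    (margS p (insert i S) (restr (insert i S) x) / margS p S (restr S x))

/-- The conditional probability `p(a|y) = p_{S∪{i}}(y,a)/p_S(y)` of `Xᵢ = a`
given `X_S = y`, for `i ∉ S`. -/
noncomputable def condP (p : (∀ j, α j) → ℝ) (i : ι) (S : Finset ι)
    (y : ∀ j : S, α j) (a : α i) : ℝ :=
  margS p (insert i S) (restr (insert i S) (Function.update (fill S y) i a)) / margS p S y

/-- The optimal CPT `θ̂(a,x) = p(a|x_S) = p_{S∪{i}}(x_S,a)/p_S(x_S)`. -/
noncomputable def hatCPT (p : (∀ j, α j) → ℝ) (i : ι) (S : Finset ι)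
    (a : α i) (x : ∀ j, α j) : ℝ :=
  margS p (insert i S) (restr (insert i S) (Function.update x i a)) /
    margS p S (restr S x)

set_option linter.unusedSectionVars false

lemma restr_eq_iff {S : Finset ι} {u v : ∀ j, α j} :
    restr S u = restr S v ↔ ∀ j ∈ S, u j = v j := by
  constructor
  · intro h j hj
    exact congrFun h ⟨j, hj⟩
  · intro h
    funext j
    exact h j j.2

lemma restr_fill (S : Finset ι) (y : ∀ j : S, α j) : restr S (fill S y) = y := by
  funext j
  simp [restr, fill, j.2]

lemma margS_pos {p : (∀ j, α j) → ℝ} (hp : ∀ x, 0 < p x) (S : Finset ι)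
    (y : ∀ j : S, α j) : 0 < margS p S y := by
  apply Finset.sum_pos'
  · intro x _
    split
    · exact (hp x).le
    · exact le_refl 0
  · exact ⟨fill S y, mem_univ _, by simp [restr_fill, hp (fill S y)]⟩

lemma restr_update_of_not_mem {S : Finset ι} {i : ι} (hi : i ∉ S) (x : ∀ j, α j) (a : α i) :
    restr S (Function.update x i a) = restr S x := by
  rw [restr_eq_iff]
  intro j hj
  exact Function.update_of_ne (fun h : j = i => hi (h ▸ hj)) a x

lemma restr_insert_update_iff {S : Finset ι} {i : ι} (hi : i ∉ S) {z x : ∀ j, α j} {a : α i} :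
    restr (insert i S) z = restr (insert i S) (Function.update x i a) ↔
      (z i = a ∧ restr S z = restr S x) := by
  rw [restr_eq_iff, restr_eq_iff]
  constructor
  · intro h
    refine ⟨by simpa using h i (mem_insert_self i S), fun j hj => ?_⟩
    have := h j (mem_insert_of_mem hj)
    rwa [Function.update_of_ne (fun h' : j = i => hi (h' ▸ hj))] at this
  · rintro ⟨h1, h2⟩ j hj
    rcases Finset.mem_insert.1 hj with rfl | hj
    · simpa using h1
    · rw [Function.update_of_ne (fun h' : j = i => hi (h' ▸ hj))]
      exact h2 j hj

lemma margS_univ (p : (∀ j, α j) → ℝ) (x : ∀ j, α j) :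
    margS p univ (restr univ x) = p x := by
  unfold margS
  rw [Finset.sum_eq_single x]
  · simp
  · intro b _ hb
    rw [if_neg]
    intro h
    exact hb (funext fun j => congrFun h ⟨j, mem_univ j⟩)
  · simp

lemma sum_margS_insert {p : (∀ j, α j) → ℝ} {S : Finset ι} {i : ι} (hi : i ∉ S)
    (x : ∀ j, α j) :
    ∑ a, margS p (insert i S) (restr (insert i S) (Function.update x i a)) =
      margS p S (restr S x) := by
  unfold margS
  rw [Finset.sum_comm]
  refine Finset.sum_congr rfl fun z _ => ?_
  by_cases h : restr S z = restr S x
  · rw [if_pos h, Finset.sum_eq_single (z i)]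
    · rw [if_pos ((restr_insert_update_iff hi).2 ⟨rfl, h⟩)]
    · intro b _ hb
      rw [if_neg]
      intro hc
      exact hb ((restr_insert_update_iff hi).1 hc).1.symm
    · simp
  · rw [if_neg h]
    apply Finset.sum_eq_zero
    intro a _
    rw [if_neg]
    intro hc
    exact h ((restr_insert_update_iff hi).1 hc).2

lemma marg_eq_margS (p : (∀ j, α j) → ℝ) (i : ι) (x : ∀ j, α j) :
    marg p i x = margS p (univ.erase i) (restr (univ.erase i) x) := by
  have hi : i ∉ univ.erase i := notMem_erase i univ
  have h := sum_margS_insert (p := p) hi x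
  rw [Finset.insert_erase (mem_univ i)] at h
  rw [← h, marg]
  refine Finset.sum_congr rfl fun a _ => (margS_univ p _).symm

lemma gibbs {β : Type} [Fintype β] (p q : β → ℝ) (hp : ∀ x, 0 < p x)
    (hq : ∀ x, 0 < q x) (h : ∑ x, q x ≤ ∑ x, p x) :
    0 ≤ ∑ x, p x * Real.log (p x / q x) := by
  have key : ∀ x : β, p x * Real.log (q x / p x) ≤ q x - p x := by
    intro x
    have h1 := Real.log_le_sub_one_of_pos (div_pos (hq x) (hp x))
    have h2 : p x * Real.log (q x / p x) ≤ p x * (q x / p x - 1) :=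
      mul_le_mul_of_nonneg_left h1 (hp x).le
    have h3 : p x * (q x / p x - 1) = q x - p x := by
      rw [mul_sub, mul_div_cancel₀ _ (hp x).ne', mul_one]
    linarith
  have h2 : ∑ x, p x * Real.log (q x / p x) ≤ 0 := by
    calc ∑ x, p x * Real.log (q x / p x) ≤ ∑ x, (q x - p x) :=
          Finset.sum_le_sum (fun x _ => key x)
      _ = ∑ x, q x - ∑ x, p x := Finset.sum_sub_distrib _ _
      _ ≤ 0 := by linarith
  have h3 : ∀ x : β, p x * Real.log (p x / q x) = -(p x * Real.log (q x / p x)) := by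
    intro x
    rw [Real.log_div (hp x).ne' (hq x).ne', Real.log_div (hq x).ne' (hp x).ne']
    ring
  simp only [h3, Finset.sum_neg_distrib]
  linarith

/-- The key identity and inequality. -/
lemma key_identity {p : (∀ j, α j) → ℝ} (hpd : (∀ x, 0 ≤ p x) ∧ ∑ x, p x = 1)
    (hppos : ∀ x, 0 < p x) {i : ι} {S : Finset ι} (hi : i ∉ S) :
    (∑ x, p x * Real.log (fullCond p i x / hatCPT p i S (x i) x)) =
      condEnt p i S - condEnt p i (univ.erase i) ∧
    0 ≤ condEnt p i S - condEnt p i (univ.erase i) := by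
  -- positivity facts
  have hmS : ∀ (T : Finset ι) (y : ∀ j : T, α j), 0 < margS p T y :=
    fun T y => margS_pos hppos T y
  have hmarg : ∀ x, 0 < marg p i x := by
    intro x
    rw [marg_eq_margS]; exact hmS _ _
  -- r x : the conditional ratio
  set r : (∀ j, α j) → ℝ :=
    fun x => margS p (insert i S) (restr (insert i S) x) / margS p S (restr S x) with hr
  have hrpos : ∀ x, 0 < r x := fun x => div_pos (hmS _ _) (hmS _ _)
  have hhat : ∀ x, hatCPT p i S (x i) x = r x := by
    intro x
    unfold hatCPT
    rw [Function.update_eq_self]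
  -- condEnt at erase i
  have hfull : condEnt p i (univ.erase i) = -∑ x, p x * Real.log (fullCond p i x) := by
    unfold condEnt
    congr 1
    refine Finset.sum_congr rfl fun x _ => ?_
    rw [Finset.insert_erase (mem_univ i), margS_univ, ← marg_eq_margS]
    rfl
  have hS : condEnt p i S = -∑ x, p x * Real.log (r x) := rfl
  -- q := marg * r sums to 1
  have hsumq : ∑ x, marg p i x * r x = 1 := by
    have hinv : Function.Involutive
        (fun z : (∀ j, α j) × α i => (Function.update z.1 i z.2, z.1 i)) := by
      intro z
      simp [Function.update_idem]
    calc ∑ x, marg p i x * r x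
        = ∑ x, ∑ a, p (Function.update x i a) * r x := by
          refine Finset.sum_congr rfl fun x _ => ?_
          rw [marg, Finset.sum_mul]
      _ = ∑ z : (∀ j, α j) × α i, p (Function.update z.1 i z.2) * r z.1 := by
          rw [Fintype.sum_prod_type]
      _ = ∑ z : (∀ j, α j) × α i, p z.1 * r (Function.update z.1 i z.2) := by
          refine Fintype.sum_bijective _ hinv.bijective _ _ fun z => ?_
          show p (Function.update z.1 i z.2) * r z.1 =
            p (Function.update z.1 i z.2) *
              r (Function.update (Function.update z.1 i z.2) i (z.1 i))
          rw [Function.update_idem, Function.update_eq_self]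
      _ = ∑ x, p x * ∑ a, r (Function.update x i a) := by
          rw [Fintype.sum_prod_type]
          refine Finset.sum_congr rfl fun x _ => ?_
          rw [Finset.mul_sum]
      _ = ∑ x, p x * 1 := by
          refine Finset.sum_congr rfl fun x _ => ?_
          congr 1
          have : ∑ a, r (Function.update x i a) =
              (∑ a, margS p (insert i S) (restr (insert i S) (Function.update x i a))) /
                margS p S (restr S x) := by
            rw [Finset.sum_div]
            refine Finset.sum_congr rfl fun a _ => ?_
            simp only [hr]
            rw [restr_update_of_not_mem hi]
          rw [this, sum_margS_insert hi, div_self (hmS _ _).ne']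
      _ = 1 := by simpa using hpd.2
  -- the sum identity
  have hident : (∑ x, p x * Real.log (fullCond p i x / hatCPT p i S (x i) x)) =
      condEnt p i S - condEnt p i (univ.erase i) := by
    rw [hfull, hS, neg_sub_neg]
    rw [← Finset.sum_sub_distrib]
    refine Finset.sum_congr rfl fun x _ => ?_
    rw [hhat, fullCond, Real.log_div (div_pos (hppos x) (hmarg x)).ne' (hrpos x).ne']
    ring
  refine ⟨hident, ?_⟩
  rw [← hident]
  have : ∀ x, fullCond p i x / hatCPT p i S (x i) x = p x / (marg p i x * r x) := by
    intro x
    rw [hhat, fullCond, div_div]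
  simp only [this]
  exact gibbs p (fun x => marg p i x * r x) hppos
    (fun x => mul_pos (hmarg x) (hrpos x)) (by rw [hsumq, hpd.2])


/-- Theorem 5: convergence of learned full-conditional manifolds:
if the regularizer at the full input set tends to `0`, then
`H_{p_N}(Xᵢ|X_{Ŝ_N}) − H_{p_N}(Xᵢ|X₋ᵢ) → 0`; equivalently
`KL(p_N‖E(θ̂_N)) → 0` for `θ̂_N(a,x) = p_N(a|x_{Ŝ_N})`. -/
theorem convergence_of_learned_manifolds
    (i : ι) (p : ℕ → (∀ j, α j) → ℝ)
    (hp : ∀ N, IsDist (p N)) (hppos : ∀ N x, 0 < p N x)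
    (R : ℕ → Finset ι → ℝ)
    (hR : ∀ N, ∀ S ⊆ Finset.univ.erase i, 0 ≤ R N S)
    (Shat : ℕ → Finset ι) (hShat : ∀ N, Shat N ⊆ Finset.univ.erase i)
    (hmin : ∀ N, ∀ S ⊆ Finset.univ.erase i,
      condEnt (p N) i (Shat N) + R N (Shat N) ≤ condEnt (p N) i S + R N S)
    (hRlim : Filter.Tendsto (fun N => R N (Finset.univ.erase i))
      Filter.atTop (nhds 0)) :
    Filter.Tendsto
      (fun N => condEnt (p N) i (Shat N) - condEnt (p N) i (Finset.univ.erase i))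
      Filter.atTop (nhds 0) ∧
    Filter.Tendsto
      (fun N => ∑ x, p N x *
        Real.log (fullCond (p N) i x / hatCPT (p N) i (Shat N) (x i) x))
      Filter.atTop (nhds 0) := by
  have hinotin : ∀ N, i ∉ Shat N := fun N h => Finset.notMem_erase i univ (hShat N h)
  have key : ∀ N,
      (∑ x, p N x * Real.log (fullCond (p N) i x / hatCPT (p N) i (Shat N) (x i) x)) =
        condEnt (p N) i (Shat N) - condEnt (p N) i (univ.erase i) ∧
      0 ≤ condEnt (p N) i (Shat N) - condEnt (p N) i (univ.erase i) :=
    fun N => key_identity (hp N) (hppos N) (hinotin N)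
  have h0 : ∀ N, 0 ≤ condEnt (p N) i (Shat N) - condEnt (p N) i (univ.erase i) :=
    fun N => (key N).2
  have hub : ∀ N, condEnt (p N) i (Shat N) - condEnt (p N) i (univ.erase i) ≤
      R N (univ.erase i) := by
    intro N
    have h1 := hmin N (univ.erase i) (Finset.Subset.refl _)
    have h2 := hR N (Shat N) (hShat N)
    linarith
  have htends : Filter.Tendsto
      (fun N => condEnt (p N) i (Shat N) - condEnt (p N) i (Finset.univ.erase i))
      Filter.atTop (nhds 0) := squeeze_zero h0 hub hRlim
  refine ⟨htends, ?_⟩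
  have : (fun N => ∑ x, p N x *
      Real.log (fullCond (p N) i x / hatCPT (p N) i (Shat N) (x i) x)) =
      fun N => condEnt (p N) i (Shat N) - condEnt (p N) i (Finset.univ.erase i) :=
    funext fun N => (key N).1
  rw [this]
  exact htends
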